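/- For every real J > 2 there exists y* with 0 < y* < 1/2 such that the set of real solutions of the equation 2y = tanh(J y) is exactly {−y*, 0, y*}. -/

import Mathlib

open Real Set

private lemma tanh_def' : Real.tanh = fun x => Real.sinh x / Real.cosh x :=
  funext Real.tanh_eq_sinh_div_cosh

private lemma tanh_lt_one' (x : ℝ) : Real.tanh x < 1 := by
  rw [Real.tanh_eq_sinh_div_cosh]
  exact (div_lt_one (Real.cosh_pos x)).2 (Real.sinh_lt_cosh x)

private lemma hasDerivAt_tanh' (x : ℝ) :
    HasDerivAt Real.tanh (1 / Real.cosh x ^ 2) x := by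
  have h : HasDerivAt (fun y => Real.sinh y / Real.cosh y)
      ((Real.cosh x * Real.cosh x - Real.sinh x * Real.sinh x) / Real.cosh x ^ 2) x :=
    (Real.hasDerivAt_sinh x).div (Real.hasDerivAt_cosh x) (Real.cosh_pos x).ne'
  have hval : (Real.cosh x * Real.cosh x - Real.sinh x * Real.sinh x) / Real.cosh x ^ 2
      = 1 / Real.cosh x ^ 2 := by
    have h2 := Real.cosh_sq_sub_sinh_sq x
    rw [show Real.cosh x * Real.cosh x - Real.sinh x * Real.sinh x
        = Real.cosh x ^ 2 - Real.sinh x ^ 2 by ring, h2]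
  rw [hval] at h
  rw [tanh_def']
  exact h

private lemma hasDerivAt_g (J x : ℝ) :
    HasDerivAt (fun y => Real.tanh (J * y)) (J / Real.cosh (J * x) ^ 2) x := by
  have h1 : HasDerivAt (fun y : ℝ => J * y) J x := by
    simpa using (hasDerivAt_id x).const_mul J
  have h2 := (hasDerivAt_tanh' (J * x)).comp x h1
  convert h2 using 1
  all_goals first | rfl | ring

private lemma concave_g (J : ℝ) (hJ : 0 < J) :
    StrictConcaveOn ℝ (Ici (0:ℝ)) (fun y => Real.tanh (J * y)) := by
  have hderiv : deriv (fun y => Real.tanh (J * y)) = fun x => J / Real.cosh (J * x) ^ 2 :=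
    funext fun x => (hasDerivAt_g J x).deriv
  apply StrictAntiOn.strictConcaveOn_of_deriv (convex_Ici 0)
  · exact fun x _ => ((hasDerivAt_g J x).continuousAt).continuousWithinAt
  · rw [hderiv, interior_Ici]
    intro a ha b hb hab
    have ha' : (0:ℝ) < a := ha
    have hb' : (0:ℝ) < b := hb
    have hcosh : Real.cosh (J * a) < Real.cosh (J * b) := by
      rw [Real.cosh_lt_cosh]
      rw [abs_of_pos (mul_pos hJ ha'), abs_of_pos (mul_pos hJ hb')]
      exact mul_lt_mul_of_pos_left hab hJ
    have h1 : (0:ℝ) < Real.cosh (J * a) ^ 2 := by positivity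
    have h2 : Real.cosh (J * a) ^ 2 < Real.cosh (J * b) ^ 2 :=
      pow_lt_pow_left₀ hcosh (Real.cosh_pos _).le (by norm_num)
    exact div_lt_div_of_pos_left hJ h1 h2

/-- For `J > 2`, the Curie–Weiss equation `2y = tanh(J y)` has exactly three
real solutions `{−y*, 0, y*}` with `0 < y* < 1/2`. -/
theorem statement16 (J : ℝ) (hJ : 2 < J) :
    ∃ ys : ℝ, 0 < ys ∧ ys < 1 / 2 ∧
      {y : ℝ | 2 * y = Real.tanh (J * y)} = {-ys, 0, ys} := by
  have hJ0 : (0:ℝ) < J := by linarith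
  set g : ℝ → ℝ := fun y => Real.tanh (J * y) with hg
  have hg0 : g 0 = 0 := by simp [hg, Real.tanh_zero]
  -- step 1: find a ∈ (0, 1/2) with 2a < g a
  obtain ⟨a, ha0, ha2, hga⟩ : ∃ a : ℝ, 0 < a ∧ a < 1/2 ∧ 2 * a < g a := by
    have hd : HasDerivAt g J 0 := by
      simpa using hasDerivAt_g J 0
    have hslope := hasDerivAt_iff_tendsto_slope.1 hd
    have hev : ∀ᶠ y in nhdsWithin 0 {(0:ℝ)}ᶜ, 2 < slope g 0 y :=
      hslope (Ioi_mem_nhds hJ)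
    have hev2 : ∀ᶠ y in nhdsWithin (0:ℝ) (Ioi 0), 2 < slope g 0 y :=
      hev.filter_mono (nhdsWithin_mono 0 (fun y hy => ne_of_gt hy))
    have hev3 : ∀ᶠ y in nhdsWithin (0:ℝ) (Ioi 0), y < 1/2 := by
      apply eventually_nhdsWithin_of_eventually_nhds
      exact Filter.tendsto_id.eventually_lt_const (by norm_num)
    have hev4 : ∀ᶠ y in nhdsWithin (0:ℝ) (Ioi 0), y ∈ Ioi (0:ℝ) :=
      eventually_mem_nhdsWithin
    obtain ⟨a, ⟨h1, h2⟩, h3⟩ := ((hev2.and hev3).and hev4).exists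
    have ha : (0:ℝ) < a := h3
    refine ⟨a, ha, h2, ?_⟩
    rw [slope_def_field, hg0, sub_zero, sub_zero, lt_div_iff₀ ha] at h1
    linarith
  -- step 2: g (1/2) < 1 = 2 * (1/2)
  have hhalf : g (1/2) < 2 * (1/2) := by
    simpa using tanh_lt_one' (J * (1/2))
  -- step 3: IVT for f y = g y - 2 y on [a, 1/2]
  have hcont : ContinuousOn (fun y => g y - 2 * y) (Icc a (1/2)) := by
    apply ContinuousOn.sub
    · exact fun x _ => ((hasDerivAt_g J x).continuousAt).continuousWithinAt
    · exact (continuous_const.mul continuous_id).continuousOn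
  obtain ⟨ys, hysmem, hysval⟩ : ∃ ys ∈ Icc a (1/2), g ys - 2 * ys = 0 := by
    have h0 : (0:ℝ) ∈ Icc (g (1/2) - 2 * (1/2)) (g a - 2 * a) :=
      ⟨by linarith, by linarith⟩
    obtain ⟨ys, hmem, hval⟩ := intermediate_value_Icc' ha2.le hcont h0
    exact ⟨ys, hmem, hval⟩
  have hys0 : 0 < ys := lt_of_lt_of_le ha0 hysmem.1
  have hyseq : 2 * ys = g ys := by linarith
  have hyshalf : ys < 1/2 := by
    rcases lt_or_eq_of_le hysmem.2 with h | h
    · exact h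
    · exfalso; rw [h] at hyseq; linarith
  -- step 4: uniqueness of positive solution via strict concavity
  have key : ∀ p q : ℝ, 0 < p → p < q → 2 * p = g p → 2 * q = g q → False := by
    intro p q hp hpq hep heq
    have hconc := concave_g J hJ0
    have hq : 0 < q := hp.trans hpq
    have hslt : p / q < 1 := (div_lt_one hq).2 hpq
    have hs : 0 < p / q := div_pos hp hq
    have htpos : 0 < 1 - p / q := by linarith
    have hsum : (1 - p / q) + p / q = 1 := by ring
    have h := hconc.2 (self_mem_Ici) (mem_Ici.2 hq.le) hq.ne htpos hs hsum
    simp only [smul_eq_mul, mul_zero, zero_add] at h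
    have hgq : Real.tanh (J * q) = 2 * q := by simpa [hg] using heq.symm
    have hgp : Real.tanh (J * p) = 2 * p := by simpa [hg] using hep.symm
    rw [Real.tanh_zero, mul_zero, zero_add,
      show p / q * q = p from div_mul_cancel₀ p hq.ne', hgq, hgp] at h
    have : p / q * (2 * q) = 2 * p := by field_simp
    linarith
  have huniq : ∀ y : ℝ, 0 < y → 2 * y = g y → y = ys := by
    intro y hy hey
    rcases lt_trichotomy y ys with h | h | h
    · exact (key y ys hy h hey hyseq).elim
    · exact h
    · exact (key ys y hys0 h hyseq hey).elim
  refine ⟨ys, hys0, hyshalf, ?_⟩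
  ext y
  simp only [mem_setOf_eq, mem_insert_iff, mem_singleton_iff]
  constructor
  · intro hy
    rcases lt_trichotomy y 0 with h | h | h
    · left
      have hneg : 2 * (-y) = g (-y) := by
        simp only [hg] at hy ⊢
        rw [show J * -y = -(J * y) by ring, Real.tanh_neg]
        linarith
      have := huniq (-y) (by linarith) hneg
      linarith
    · right; left; exact h
    · right; right; exact huniq y h hy
  · rintro (rfl | rfl | rfl)
    · show 2 * (-ys) = Real.tanh (J * -ys)
      rw [show J * -ys = -(J * ys) by ring, Real.tanh_neg]
      simp only [hg] at hyseq
      linarith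
    · simp [Real.tanh_zero]
    · exact hyseq
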